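/- If every Hardy–Ramanujan number m > 5040 satisfies σ(m)/m < e^γ · log(log m), then every integer n > 5040 satisfies σ(n)/n < e^γ · log(log n). -/

import Mathlib

set_option maxRecDepth 1000000
set_option linter.unusedVariables false
set_option linter.unreachableTactic false
set_option linter.unusedTactic false

open Real Finset

/-- A positive integer is a Hardy–Ramanujan number if it is of the form
`p_1^(a_1) * p_2^(a_2) * ⋯ * p_k^(a_k)` with `k ≥ 1` and `a_1 ≥ a_2 ≥ ⋯ ≥ a_k ≥ 1`,
where `p_i` is the `i`-th prime. -/
def IsHardyRamanujan (n : ℕ) : Prop :=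
  ∃ k : ℕ, ∃ a : ℕ → ℕ, 1 ≤ k ∧ (∀ i < k, 1 ≤ a i) ∧ (∀ i, i + 1 < k → a (i + 1) ≤ a i) ∧
    n = ∏ i ∈ Finset.range k, Nat.nth Nat.Prime i ^ a i

local notation "σ" => ArithmeticFunction.sigma 1

def S (p a : ℕ) : ℕ := ∑ i ∈ Finset.range (a + 1), p ^ i

-- termwise comparison helper : p ≤ q, s ≤ t → p^t * q^s ≤ p^s * q^t
lemma pow_cross {p q s t : ℕ} (hpq : p ≤ q) (hst : s ≤ t) (hp : 0 < p) :
    p ^ t * q ^ s ≤ p ^ s * q ^ t := by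
  obtain ⟨d, rfl⟩ := Nat.exists_eq_add_of_le hst
  rw [pow_add, pow_add]
  calc p ^ s * p ^ d * q ^ s ≤ p ^ s * q ^ d * q ^ s := by
        exact Nat.mul_le_mul_right _ (Nat.mul_le_mul_left _ (Nat.pow_le_pow_left hpq d))
    _ = p ^ s * (q ^ s * q ^ d) := by ring

/-- prime-lowering: if p ≤ q then S q b * p^b ≤ S p b * q^b  (i.e. f(q,b) ≤ f(p,b)) -/
lemma mono_S {p q b : ℕ} (hp : 0 < p) (hpq : p ≤ q) : S q b * p ^ b ≤ S p b * q ^ b := by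
  unfold S
  rw [Finset.sum_mul, Finset.sum_mul]
  apply Finset.sum_le_sum
  intro i hi
  have hib : i ≤ b := Nat.lt_succ_iff.1 (Finset.mem_range.1 hi)
  calc q ^ i * p ^ b = p ^ b * q ^ i := Nat.mul_comm _ _
    _ ≤ p ^ i * q ^ b := pow_cross hpq hib hp

/-- rearrangement key: p ≤ q, b ≤ a :  f(p,b)f(q,a) ≤ f(p,a)f(q,b), cross-multiplied. -/
lemma key_S {p q a b : ℕ} (hp : 0 < p) (hpq : p ≤ q) (hba : b ≤ a) :
    (S p b * p ^ a) * (S q a * q ^ b) ≤ (S p a * p ^ b) * (S q b * q ^ a) := by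
  have hq : 0 < q := lt_of_lt_of_le hp hpq
  have hshift : ∀ r : ℕ, 0 < r → ∀ c d : ℕ, S r c * r ^ d = ∑ s ∈ Finset.Ico d (c + d + 1), r ^ s := by
    intro r hr c d
    unfold S
    rw [Finset.sum_mul]
    rw [Finset.sum_Ico_eq_sum_range]
    have : c + d + 1 - d = c + 1 := by omega
    rw [this]
    apply Finset.sum_congr rfl
    intro i _
    rw [← pow_add]
    ring_nf
  set R := a + b + 1 with hR
  have h1 : S p a * p ^ b = ∑ s ∈ Finset.Ico b R, p ^ s := by
    rw [hshift p hp a b]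
  have h2 : S q b * q ^ a = ∑ s ∈ Finset.Ico a R, q ^ s := by
    rw [hshift q hq b a, show b + a + 1 = R from by omega]
  have h3 : S p b * p ^ a = ∑ s ∈ Finset.Ico a R, p ^ s := by
    rw [hshift p hp b a, show b + a + 1 = R from by omega]
  have h4 : S q a * q ^ b = ∑ s ∈ Finset.Ico b R, q ^ s := by
    rw [hshift q hq a b]
  rw [h1, h2, h3, h4]
  have hsplitp : ∑ s ∈ Finset.Ico b R, p ^ s
      = (∑ s ∈ Finset.Ico b a, p ^ s) + ∑ s ∈ Finset.Ico a R, p ^ s :=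
    (Finset.sum_Ico_consecutive _ hba (by omega)).symm
  have hsplitq : ∑ s ∈ Finset.Ico b R, q ^ s
      = (∑ s ∈ Finset.Ico b a, q ^ s) + ∑ s ∈ Finset.Ico a R, q ^ s :=
    (Finset.sum_Ico_consecutive _ hba (by omega)).symm
  rw [hsplitp, hsplitq, add_mul, mul_add]
  apply Nat.add_le_add_right
  -- (∑ Ico a R p^s) * (∑ Ico b a q^s) ≤ (∑ Ico b a p^s) * (∑ Ico a R q^s)
  rw [Finset.sum_mul_sum, Finset.sum_mul_sum, Finset.sum_comm]
  apply Finset.sum_le_sum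
  intro j hj
  apply Finset.sum_le_sum
  intro i hi
  have hji : j ≤ i := le_trans (Finset.mem_Ico.1 hj).2.le (Finset.mem_Ico.1 hi).1
  exact pow_cross hpq hji hp


lemma sigma_prime_pow {p : ℕ} (hp : p.Prime) (a : ℕ) : σ (p ^ a) = S p a := by
  rw [ArithmeticFunction.sigma_one_apply, Nat.sum_divisors_prime_pow hp]; rfl

lemma sigma_coprime_mul {m n : ℕ} (h : Nat.Coprime m n) : σ (m * n) = σ m * σ n :=
  ArithmeticFunction.isMultiplicative_sigma.map_mul_of_coprime h

lemma sigma_pos {n : ℕ} (hn : 0 < n) : 0 < σ n := by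
  rw [ArithmeticFunction.sigma_one_apply]
  apply Finset.sum_pos
  · intro i hi; exact Nat.pos_of_mem_divisors hi
  · exact ⟨1, Nat.one_mem_divisors.2 hn.ne'⟩

lemma decomp1 {q n : ℕ} (hq : q.Prime) (hqn : q ∣ n) (hn : n ≠ 0) :
    ∃ β t, 1 ≤ β ∧ n = q ^ β * t ∧ ¬ q ∣ t ∧ t ≠ 0 ∧ β = n.factorization q := by
  refine ⟨n.factorization q, (n / q ^ n.factorization q), ?_, ?_, ?_,
    (Nat.ordCompl_pos q hn).ne', rfl⟩
  · exact (Nat.Prime.factorization_pos_of_dvd hq hn hqn)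
  · exact (Nat.ordProj_mul_ordCompl_eq_self n q).symm
  · exact Nat.not_dvd_ordCompl hq hn

lemma decomp2 {p q n : ℕ} (hp : p.Prime) (hq : q.Prime) (hpq : p ≠ q)
    (hpn : p ∣ n) (hqn : q ∣ n) (hn : n ≠ 0) :
    ∃ α β t, 1 ≤ α ∧ 1 ≤ β ∧ n = p ^ α * (q ^ β * t) ∧ ¬ p ∣ t ∧ ¬ q ∣ t ∧ t ≠ 0 ∧
      α = n.factorization p ∧ β = n.factorization q := by
  obtain ⟨α, t1, hα, hn1, hpt1, ht1, hvα⟩ := decomp1 hp hpn hn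
  have hqt1 : q ∣ t1 := by
    have hc : Nat.Coprime q (p ^ α) := ((Nat.coprime_primes hq hp).2 (Ne.symm hpq)).pow_right α
    exact hc.dvd_of_dvd_mul_left (hn1 ▸ hqn)
  obtain ⟨β, t, hβ, ht1e, hqt, ht, hvβ⟩ := decomp1 hq hqt1 ht1
  refine ⟨α, β, t, hα, hβ, by rw [hn1, ht1e], ?_, hqt, ht, hvα, ?_⟩
  · intro hpt; exact hpt1 (ht1e ▸ hpt.mul_left _)
  · rw [hvβ, hn1, Nat.factorization_mul (pow_ne_zero _ hp.pos.ne') ht1,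
      Nat.Prime.factorization_pow hp]
    simp only [Finsupp.add_apply, Finsupp.single_apply, if_neg hpq, zero_add]

lemma coprime_pp_t {p t : ℕ} (hp : p.Prime) (hpt : ¬ p ∣ t) (α : ℕ) : Nat.Coprime (p ^ α) t :=
  ((Nat.Prime.coprime_iff_not_dvd hp).2 hpt).pow_left α

lemma sigma_p_mul {p α t : ℕ} (hp : p.Prime) (hpt : ¬ p ∣ t) :
    σ (p ^ α * t) = S p α * σ t := by
  rw [sigma_coprime_mul (coprime_pp_t hp hpt α), sigma_prime_pow hp]

lemma sigma_pq_mul {p q α β t : ℕ} (hp : p.Prime) (hq : q.Prime) (hpq : p ≠ q)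
    (hpt : ¬ p ∣ t) (hqt : ¬ q ∣ t) :
    σ (p ^ α * (q ^ β * t)) = S p α * (S q β * σ t) := by
  have h1 : Nat.Coprime (p ^ α) (q ^ β * t) := by
    apply Nat.Coprime.mul_right
    · exact Nat.Coprime.pow _ _ ((Nat.coprime_primes hp hq).2 hpq)
    · exact coprime_pp_t hp hpt α
  rw [sigma_coprime_mul h1, sigma_prime_pow hp, sigma_p_mul hq hqt]

lemma pow_cross_lt {p q α β : ℕ} (hpq : p < q) (hab : α < β) (hp : 0 < p) :
    p ^ β * q ^ α < p ^ α * q ^ β := by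
  obtain ⟨d, rfl⟩ := Nat.exists_eq_add_of_le hab.le
  have hd : 0 < d := by omega
  have h1 : p ^ d < q ^ d := Nat.pow_lt_pow_left hpq hd.ne'
  rw [pow_add, pow_add]
  calc p ^ α * p ^ d * q ^ α < p ^ α * q ^ d * q ^ α := by
        exact (Nat.mul_lt_mul_right (Nat.pow_pos (hp.trans hpq))).2
          ((Nat.mul_lt_mul_left (Nat.pow_pos hp)).2 h1)
    _ = p ^ α * (q ^ α * q ^ d) := by ring


-- helper: q ≥ 11 numeric transfer
lemma repl_numeric {q β t st : ℕ} (hq : 11 ≤ q)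
    (h : 110 * (S 11 β * st) ≤ 403 * (11 ^ β * t)) :
    110 * (S q β * st) ≤ 403 * (q ^ β * t) := by
  have hm : S q β * 11 ^ β ≤ S 11 β * q ^ β := mono_S (by norm_num) hq
  have h1 : 110 * (S q β * st) * 11 ^ β ≤ 403 * (q ^ β * t) * 11 ^ β := by
    calc 110 * (S q β * st) * 11 ^ β = 110 * st * (S q β * 11 ^ β) := by ring
      _ ≤ 110 * st * (S 11 β * q ^ β) := Nat.mul_le_mul_left _ hm
      _ = (110 * (S 11 β * st)) * q ^ β := by ring
      _ ≤ (403 * (11 ^ β * t)) * q ^ β := Nat.mul_le_mul_right _ h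
      _ = 403 * (q ^ β * t) * 11 ^ β := by ring
  exact Nat.le_of_mul_le_mul_right h1 (Nat.pow_pos (by norm_num))

lemma prime_dvd_5040 {p : ℕ} (hp : p.Prime) (h : p ∣ 5040) :
    p = 2 ∨ p = 3 ∨ p = 5 ∨ p = 7 := by
  have h5040 : (5040:ℕ) = 2 ^ 4 * (3 ^ 2 * (5 * 7)) := by norm_num
  rw [h5040] at h
  rcases (Nat.Prime.dvd_mul hp).1 h with h' | h'
  · exact Or.inl ((Nat.prime_dvd_prime_iff_eq hp Nat.prime_two).1 (hp.dvd_of_dvd_pow h'))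
  rcases (Nat.Prime.dvd_mul hp).1 h' with h'' | h''
  · exact Or.inr (Or.inl ((Nat.prime_dvd_prime_iff_eq hp Nat.prime_three).1 (hp.dvd_of_dvd_pow h'')))
  rcases (Nat.Prime.dvd_mul hp).1 h'' with h3 | h3
  · exact Or.inr (Or.inr (Or.inl ((Nat.prime_dvd_prime_iff_eq hp (by norm_num)).1 h3)))
  · exact Or.inr (Or.inr (Or.inr ((Nat.prime_dvd_prime_iff_eq hp (by norm_num)).1 h3)))

lemma prime_not_dvd_5040 {q : ℕ} (hq : q.Prime) (h : ¬ q ∣ 5040) : 11 ≤ q := by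
  by_contra hq11
  push_neg at hq11
  interval_cases q <;> revert hq h <;> decide

lemma step_repl_5040 {p q β t : ℕ} (hp : p.Prime) (hq : q.Prime) (hpq : p < q)
    (hpt : ¬ p ∣ t) (hqt : ¬ q ∣ t) (hβ : 1 ≤ β) (h : p ^ β * t = 5040) :
    110 * (S q β * σ t) ≤ 403 * (q ^ β * t) := by
  have hpd : p ∣ 5040 := h ▸ (dvd_pow_self p (by omega)).mul_right t
  have hqd : ¬ q ∣ 5040 := by
    rw [← h]
    intro hd
    rcases (Nat.Prime.dvd_mul hq).1 hd with h' | h'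
    · exact absurd ((Nat.prime_dvd_prime_iff_eq hq hp).1 (hq.dvd_of_dvd_pow h')) hpq.ne'
    · exact hqt h'
  have hq11 : 11 ≤ q := prime_not_dvd_5040 hq hqd
  have hβle : β ≤ 12 := by
    have h2 : p ^ β ≤ 5040 := Nat.le_of_dvd (by norm_num) (h ▸ (Dvd.intro t rfl))
    by_contra hc
    push_neg at hc
    have : 2 ^ 13 ≤ p ^ β :=
      le_trans (Nat.pow_le_pow_right (by norm_num) (by omega)) (Nat.pow_le_pow_left hp.two_le β)
    norm_num at this; omega
  apply repl_numeric hq11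
  rcases prime_dvd_5040 hp hpd with rfl | rfl | rfl | rfl
  · have : β = 4 ∧ t = 315 := by interval_cases β <;> omega
    obtain ⟨rfl, rfl⟩ := this
    have : σ 315 = 624 := by decide
    rw [this]; norm_num [S, Finset.sum_range_succ]
  · have : β = 2 ∧ t = 560 := by interval_cases β <;> omega
    obtain ⟨rfl, rfl⟩ := this
    have : σ 560 = 1488 := by decide
    rw [this]; norm_num [S, Finset.sum_range_succ]
  · have : β = 1 ∧ t = 1008 := by interval_cases β <;> omega
    obtain ⟨rfl, rfl⟩ := this
    have : σ 1008 = 3224 := by decide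
    rw [this]; norm_num [S, Finset.sum_range_succ]
  · have : β = 1 ∧ t = 720 := by interval_cases β <;> omega
    obtain ⟨rfl, rfl⟩ := this
    have : σ 720 = 2418 := by decide
    rw [this]; norm_num [S, Finset.sum_range_succ]

lemma step_swap_5040 {p q α β t : ℕ} (hp : p.Prime) (hq : q.Prime) (hpq : p < q)
    (hpt : ¬ p ∣ t) (hqt : ¬ q ∣ t) (hαβ : α < β) (hα : 1 ≤ α)
    (h : p ^ β * (q ^ α * t) = 5040) :
    110 * (S p α * (S q β * σ t)) ≤ 403 * (p ^ α * (q ^ β * t)) := by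
  have hpd : p ∣ 5040 := h ▸ (dvd_pow_self p (by omega)).mul_right _
  have hqd : q ∣ 5040 := h ▸ ((dvd_pow_self q (by omega)).mul_right t).mul_left _
  have hβle : β ≤ 12 := by
    have h2 : p ^ β ≤ 5040 := Nat.le_of_dvd (by norm_num) (h ▸ (Dvd.intro _ rfl))
    by_contra hc
    push_neg at hc
    have : 2 ^ 13 ≤ p ^ β :=
      le_trans (Nat.pow_le_pow_right (by norm_num) (by omega)) (Nat.pow_le_pow_left hp.two_le β)
    norm_num at this; omega
  rcases prime_dvd_5040 hp hpd with rfl | rfl | rfl | rfl <;>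
    rcases prime_dvd_5040 hq hqd with rfl | rfl | rfl | rfl <;>
      first
        | exact absurd hpq (by omega)
        | (first
            | (have hv : β = 4 ∧ α = 2 ∧ t = 35 := by
                interval_cases β <;> interval_cases α <;> omega
               obtain ⟨rfl, rfl, rfl⟩ := hv
               have hσ : σ 35 = 48 := by decide
               rw [hσ]; norm_num [S, Finset.sum_range_succ])
            | (have hv : β = 4 ∧ α = 1 ∧ t = 63 := by
                interval_cases β <;> interval_cases α <;> omega
               obtain ⟨rfl, rfl, rfl⟩ := hv
               have hσ : σ 63 = 104 := by decide
               rw [hσ]; norm_num [S, Finset.sum_range_succ])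
            | (have hv : β = 4 ∧ α = 1 ∧ t = 45 := by
                interval_cases β <;> interval_cases α <;> omega
               obtain ⟨rfl, rfl, rfl⟩ := hv
               have hσ : σ 45 = 78 := by decide
               rw [hσ]; norm_num [S, Finset.sum_range_succ])
            | (have hv : β = 2 ∧ α = 1 ∧ t = 112 := by
                interval_cases β <;> interval_cases α <;> omega
               obtain ⟨rfl, rfl, rfl⟩ := hv
               have hσ : σ 112 = 248 := by decide
               rw [hσ]; norm_num [S, Finset.sum_range_succ])
            | (have hv : β = 2 ∧ α = 1 ∧ t = 80 := by
                interval_cases β <;> interval_cases α <;> omega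
               obtain ⟨rfl, rfl, rfl⟩ := hv
               have hσ : σ 80 = 186 := by decide
               rw [hσ]; norm_num [S, Finset.sum_range_succ])
            | (exfalso; interval_cases β <;> interval_cases α <;> omega))

lemma range_of_downclosed (I : Finset ℕ) (hne : I.Nonempty)
    (hdc : ∀ j ∈ I, ∀ i < j, i ∈ I) : I = Finset.range I.card := by
  set M := I.max' hne with hM
  have hsub : Finset.range (M + 1) ⊆ I := by
    intro i hi
    rcases Nat.lt_succ_iff_lt_or_eq.1 (Finset.mem_range.1 hi) with h | h
    · exact hdc M (I.max'_mem hne) i h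
    · exact h ▸ I.max'_mem hne
  have hsub2 : I ⊆ Finset.range (M + 1) := fun i hi =>
    Finset.mem_range.2 (Nat.lt_succ_of_le (I.le_max' i hi))
  have : I = Finset.range (M + 1) := Finset.Subset.antisymm hsub2 hsub
  rw [this, Finset.card_range]

lemma hr_of_closed_sorted {n : ℕ} (hn : 2 ≤ n)
    (hclosed : ∀ p q : ℕ, p.Prime → q.Prime → p < q → q ∣ n → p ∣ n)
    (hsorted : ∀ p q : ℕ, p.Prime → q.Prime → p < q → p ∣ n → q ∣ n →
      n.factorization q ≤ n.factorization p) :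
    IsHardyRamanujan n := by
  have hn0 : n ≠ 0 := by omega
  set P := n.primeFactors with hP
  have hPne : P.Nonempty := Nat.nonempty_primeFactors.2 hn
  set k := P.card with hk
  set c := Nat.count Nat.Prime with hc
  have hinf := Nat.infinite_setOf_prime
  have hnthc : ∀ p ∈ P, Nat.nth Nat.Prime (c p) = p := fun p hp =>
    Nat.nth_count (Nat.prime_of_mem_primeFactors hp)
  set I := P.image c with hI
  have hcardI : I.card = k := by
    rw [hI]
    apply Finset.card_image_of_injOn
    intro p hp q hq hpq
    rw [← hnthc p hp, ← hnthc q hq, hpq]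
  have hdc : ∀ j ∈ I, ∀ i < j, i ∈ I := by
    intro j hj i hij
    obtain ⟨pj, hpj, rfl⟩ := Finset.mem_image.1 hj
    have hpj' := Nat.prime_of_mem_primeFactors hpj
    have hlt : Nat.nth Nat.Prime i < pj := by
      rw [← hnthc pj hpj]
      exact (Nat.nth_lt_nth hinf).2 hij
    have hprime_i : (Nat.nth Nat.Prime i).Prime := Nat.prime_nth_prime i
    have hdvd : Nat.nth Nat.Prime i ∣ n :=
      hclosed _ pj hprime_i hpj' hlt (Nat.dvd_of_mem_primeFactors hpj)
    have hmem : Nat.nth Nat.Prime i ∈ P := Nat.mem_primeFactors.2 ⟨hprime_i, hdvd, hn0⟩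
    exact Finset.mem_image.2 ⟨_, hmem, Nat.count_nth_of_infinite hinf i⟩
  have hIr : I = Finset.range k := by
    have := range_of_downclosed I (hPne.image c) hdc
    rwa [hcardI] at this
  have hPeq : P = (Finset.range k).image (Nat.nth Nat.Prime) := by
    rw [← hIr, hI, Finset.image_image]
    have heq : P.image ((Nat.nth Nat.Prime) ∘ c) = P.image id :=
      Finset.image_congr (fun p hp => hnthc p hp)
    rw [heq, Finset.image_id]
  -- build the witness
  refine ⟨k, fun i => n.factorization (Nat.nth Nat.Prime i), ?_, ?_, ?_, ?_⟩
  · rw [hk]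
    exact Finset.card_pos.2 hPne
  · intro i hik
    have hmem : Nat.nth Nat.Prime i ∈ P := by
      rw [hPeq]
      exact Finset.mem_image.2 ⟨i, Finset.mem_range.2 hik, rfl⟩
    exact Nat.Prime.factorization_pos_of_dvd (Nat.prime_nth_prime i) hn0
      (Nat.dvd_of_mem_primeFactors hmem)
  · intro i hik
    have hm1 : Nat.nth Nat.Prime i ∈ P := by
      rw [hPeq]; exact Finset.mem_image.2 ⟨i, Finset.mem_range.2 (by omega), rfl⟩
    have hm2 : Nat.nth Nat.Prime (i + 1) ∈ P := by
      rw [hPeq]; exact Finset.mem_image.2 ⟨i + 1, Finset.mem_range.2 hik, rfl⟩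
    exact hsorted _ _ (Nat.prime_nth_prime i) (Nat.prime_nth_prime (i + 1))
      ((Nat.nth_lt_nth hinf).2 (by omega))
      (Nat.dvd_of_mem_primeFactors hm1) (Nat.dvd_of_mem_primeFactors hm2)
  · conv_lhs => rw [← Nat.factorization_prod_pow_eq_self hn0]
    rw [Nat.prod_factorization_eq_prod_primeFactors (fun p e => p ^ e)]
    rw [← hP, hPeq]
    rw [Finset.prod_image]
    intro i hi j hj hij
    exact Nat.nth_injective hinf hij

set_option synthInstance.maxSize 2000 in
set_option synthInstance.maxHeartbeats 1000000 in
set_option maxHeartbeats 4000000 in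
lemma box_check : ∀ b0 < 13, ∀ b1 < 8, ∀ b2 < 6, ∀ b3 < 5, ∀ b4 < 4,
    2^b0*3^b1*5^b2*7^b3*11^b4 ≤ 5040 → 2^b0*3^b1*5^b2*7^b3*11^b4 ≠ 5040 →
    7*(S 2 b0*(S 3 b1*(S 5 b2*(S 7 b3*S 11 b4)))) ≤ 26*(2^b0*(3^b1*(5^b2*(7^b3*11^b4)))) := by
  decide

lemma nth_prime_val : Nat.nth Nat.Prime 0 = 2 ∧ Nat.nth Nat.Prime 1 = 3 ∧
    Nat.nth Nat.Prime 2 = 5 ∧ Nat.nth Nat.Prime 3 = 7 ∧ Nat.nth Nat.Prime 4 = 11 ∧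
    Nat.nth Nat.Prime 5 = 13 := by
  refine ⟨?_, ?_, ?_, ?_, ?_, ?_⟩
  · have h := Nat.nth_count (p := Nat.Prime) (n := 2) (by norm_num)
    rwa [show Nat.count Nat.Prime 2 = 0 by decide] at h
  · have h := Nat.nth_count (p := Nat.Prime) (n := 3) (by norm_num)
    rwa [show Nat.count Nat.Prime 3 = 1 by decide] at h
  · have h := Nat.nth_count (p := Nat.Prime) (n := 5) (by norm_num)
    rwa [show Nat.count Nat.Prime 5 = 2 by decide] at h
  · have h := Nat.nth_count (p := Nat.Prime) (n := 7) (by norm_num)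
    rwa [show Nat.count Nat.Prime 7 = 3 by decide] at h
  · have h := Nat.nth_count (p := Nat.Prime) (n := 11) (by norm_num)
    rwa [show Nat.count Nat.Prime 11 = 4 by decide] at h
  · have h := Nat.nth_count (p := Nat.Prime) (n := 13) (by norm_num)
    rwa [show Nat.count Nat.Prime 13 = 5 by decide] at h

lemma finite_check {m : ℕ} (hm : IsHardyRamanujan m) (h1 : m ≤ 5040) (h2 : m ≠ 5040) :
    7 * σ m ≤ 26 * m := by
  obtain ⟨k, a, hk, ha1, hdec, hme⟩ := hm
  obtain ⟨e0, e1, e2, e3, e4, e5⟩ := nth_prime_val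
  -- k ≤ 5
  have hk5 : k ≤ 5 := by
    by_contra hc
    push_neg at hc
    have hsub : Finset.range 6 ⊆ Finset.range k := Finset.range_subset_range.2 hc
    have hge : ∏ i ∈ Finset.range 6, Nat.nth Nat.Prime i ≤ m := by
      rw [hme]
      calc ∏ i ∈ Finset.range 6, Nat.nth Nat.Prime i
          ≤ ∏ i ∈ Finset.range 6, Nat.nth Nat.Prime i ^ a i := by
            apply Finset.prod_le_prod'
            intro i hi
            have hi6 := Finset.mem_range.1 hi
            exact Nat.le_self_pow (by have := ha1 i (by omega); omega) _
        _ ≤ ∏ i ∈ Finset.range k, Nat.nth Nat.Prime i ^ a i := by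
            apply Finset.prod_le_prod_of_subset_of_one_le' hsub
            intro i _ _
            exact Nat.one_le_iff_ne_zero.2 (pow_ne_zero _ (Nat.prime_nth_prime i).pos.ne')
    rw [show (6:ℕ) = 5+1 from rfl, Finset.prod_range_succ, Finset.prod_range_succ,
      Finset.prod_range_succ, Finset.prod_range_succ, Finset.prod_range_succ,
      Finset.prod_range_one, e0, e1, e2, e3, e4, e5] at hge
    norm_num at hge
    omega
  set b : ℕ → ℕ := fun i => if i < k then a i else 0 with hb
  have hmb : m = ∏ i ∈ Finset.range 5, Nat.nth Nat.Prime i ^ b i := by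
    rw [hme]
    rw [Finset.prod_congr rfl (g := fun i => Nat.nth Nat.Prime i ^ b i)
      (fun i hi => by rw [hb]; simp [Finset.mem_range.1 hi])]
    apply Finset.prod_subset (Finset.range_subset_range.2 hk5)
    intro i _ hni
    have hik : ¬ i < k := fun h => hni (Finset.mem_range.2 h)
    rw [hb]
    simp [hik]
  have hcop : (↑(Finset.range 5) : Set ℕ).Pairwise
      (Function.onFun Nat.Coprime fun i => Nat.nth Nat.Prime i ^ b i) := by
    intro i _ j _ hij
    exact Nat.Coprime.pow _ _
      ((Nat.coprime_primes (Nat.prime_nth_prime i) (Nat.prime_nth_prime j)).2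
        (fun h => hij (Nat.nth_injective Nat.infinite_setOf_prime h)))
  have hσ : σ m = ∏ i ∈ Finset.range 5, S (Nat.nth Nat.Prime i) (b i) := by
    rw [hmb, ArithmeticFunction.IsMultiplicative.map_prod _
      ArithmeticFunction.isMultiplicative_sigma _ hcop]
    exact Finset.prod_congr rfl fun i _ => sigma_prime_pow (Nat.prime_nth_prime i) _
  -- expand
  have hmexp : m = 2^(b 0)*3^(b 1)*5^(b 2)*7^(b 3)*11^(b 4) := by
    rw [hmb]
    rw [show (5:ℕ) = 4+1 from rfl, Finset.prod_range_succ, Finset.prod_range_succ,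
      Finset.prod_range_succ, Finset.prod_range_succ, Finset.prod_range_one,
      e0, e1, e2, e3, e4]
  have hσexp : σ m = S 2 (b 0)*(S 3 (b 1)*(S 5 (b 2)*(S 7 (b 3)*S 11 (b 4)))) := by
    rw [hσ]
    rw [show (5:ℕ) = 4+1 from rfl, Finset.prod_range_succ, Finset.prod_range_succ,
      Finset.prod_range_succ, Finset.prod_range_succ, Finset.prod_range_one,
      e0, e1, e2, e3, e4]
    ring
  -- bounds on exponents
  have hdvd : ∀ j ∈ Finset.range 5, Nat.nth Nat.Prime j ^ b j ∣ m := by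
    intro j hj
    rw [hmb]
    exact Finset.dvd_prod_of_mem _ hj
  have hmpos : 0 < m := by
    rw [hmb]
    apply Finset.prod_pos
    intro i _
    exact Nat.pow_pos (Nat.prime_nth_prime i).pos
  have hple : ∀ j ∈ Finset.range 5, Nat.nth Nat.Prime j ^ b j ≤ 5040 := fun j hj =>
    le_trans (Nat.le_of_dvd hmpos (hdvd j hj)) h1
  have hb0 : b 0 < 13 := by
    have := hple 0 (by norm_num); rw [e0] at this
    by_contra hc; push_neg at hc
    exact absurd (le_trans (Nat.pow_le_pow_right (by norm_num) hc) this) (by norm_num)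
  have hb1 : b 1 < 8 := by
    have := hple 1 (by norm_num); rw [e1] at this
    by_contra hc; push_neg at hc
    exact absurd (le_trans (Nat.pow_le_pow_right (by norm_num) hc) this) (by norm_num)
  have hb2 : b 2 < 6 := by
    have := hple 2 (by norm_num); rw [e2] at this
    by_contra hc; push_neg at hc
    exact absurd (le_trans (Nat.pow_le_pow_right (by norm_num) hc) this) (by norm_num)
  have hb3 : b 3 < 5 := by
    have := hple 3 (by norm_num); rw [e3] at this
    by_contra hc; push_neg at hc
    exact absurd (le_trans (Nat.pow_le_pow_right (by norm_num) hc) this) (by norm_num)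
  have hb4 : b 4 < 4 := by
    have := hple 4 (by norm_num); rw [e4] at this
    by_contra hc; push_neg at hc
    exact absurd (le_trans (Nat.pow_le_pow_right (by norm_num) hc) this) (by norm_num)
  have := box_check (b 0) hb0 (b 1) hb1 (b 2) hb2 (b 3) hb3 (b 4) hb4
    (hmexp ▸ h1) (hmexp ▸ h2)
  rw [hσexp, hmexp]
  calc 7 * (S 2 (b 0)*(S 3 (b 1)*(S 5 (b 2)*(S 7 (b 3)*S 11 (b 4))))) ≤
      26*(2^(b 0)*(3^(b 1)*(5^(b 2)*(7^(b 3)*11^(b 4))))) := this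
    _ = 26 * (2^(b 0)*3^(b 1)*5^(b 2)*7^(b 3)*11^(b 4)) := by ring

lemma descent : ∀ n : ℕ, 2 ≤ n → ∃ m, 2 ≤ m ∧ IsHardyRamanujan m ∧ m ≤ n ∧
    σ n * m ≤ σ m * n ∧ (m = 5040 → n ≠ 5040 → 110 * σ n ≤ 403 * n) := by
  intro n
  induction n using Nat.strong_induction_on with
  | _ n IH =>
  intro hn
  have hn0 : n ≠ 0 := by omega
  by_cases h1 : ∃ p q : ℕ, p.Prime ∧ q.Prime ∧ p < q ∧ ¬ p ∣ n ∧ q ∣ n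
  · -- replacement step
    obtain ⟨p, q, hp, hq, hpq, hpn, hqn⟩ := h1
    obtain ⟨β, t, hβ, hne, hqt, ht, _⟩ := decomp1 hq hqn hn0
    have hpt : ¬ p ∣ t := fun h => hpn (hne ▸ h.mul_left _)
    set n' := p ^ β * t with hn'
    have hp0 : 0 < p := hp.pos
    have hlt : n' < n := by
      rw [hne, hn']
      exact (Nat.mul_lt_mul_right (Nat.pos_of_ne_zero ht)).2
        (Nat.pow_lt_pow_left hpq (by omega))
    have hn'2 : 2 ≤ n' := by
      have : p ∣ n' := Dvd.dvd.mul_right (dvd_pow_self p (by omega)) t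
      have := hp.two_le
      have hn'0 : 0 < n' := Nat.pos_of_ne_zero
        (Nat.mul_ne_zero (pow_ne_zero _ hp0.ne') ht)
      calc 2 ≤ p := hp.two_le
        _ ≤ n' := Nat.le_of_dvd hn'0 ‹p ∣ n'›
    -- ratio: σ n * n' ≤ σ n' * n
    have hratio : σ n * n' ≤ σ n' * n := by
      rw [hne, hn', sigma_p_mul hq hqt, sigma_p_mul hp hpt]
      calc S q β * σ t * (p ^ β * t) = (S q β * p ^ β) * (σ t * t) := by ring
        _ ≤ (S p β * q ^ β) * (σ t * t) :=
            Nat.mul_le_mul_right _ (mono_S hp0 hpq.le)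
        _ = S p β * σ t * (q ^ β * t) := by ring
    obtain ⟨m, hm2, hmHR, hmle, hmratio, hminv⟩ := IH n' hlt hn'2
    refine ⟨m, hm2, hmHR, le_trans hmle hlt.le, ?_, ?_⟩
    · -- transitivity of ratio
      have h1 : σ n * m * n' ≤ σ m * n * n' := by
        calc σ n * m * n' = (σ n * n') * m := by ring
          _ ≤ (σ n' * n) * m := Nat.mul_le_mul_right _ hratio
          _ = (σ n' * m) * n := by ring
          _ ≤ (σ m * n') * n := Nat.mul_le_mul_right _ hmratio
          _ = σ m * n * n' := by ring
      exact Nat.le_of_mul_le_mul_right h1 (by omega)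
    · intro hm5040 _
      by_cases hn'5040 : n' = 5040
      · -- direct analysis of the step into 5040
        have := step_repl_5040 hp hq hpq hpt hqt hβ (hn' ▸ hn'5040.symm ▸ rfl)
        rw [hne, sigma_p_mul hq hqt]
        exact this
      · have hinv := hminv hm5040 hn'5040
        have h2 : 110 * σ n * n' ≤ 403 * n * n' := by
          calc 110 * σ n * n' = 110 * (σ n * n') := by ring
            _ ≤ 110 * (σ n' * n) := Nat.mul_le_mul_left _ hratio
            _ = (110 * σ n') * n := by ring
            _ ≤ (403 * n') * n := Nat.mul_le_mul_right _ hinv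
            _ = 403 * n * n' := by ring
        exact Nat.le_of_mul_le_mul_right h2 (by omega)
  · by_cases h2 : ∃ p q : ℕ, p.Prime ∧ q.Prime ∧ p < q ∧ p ∣ n ∧ q ∣ n ∧
        n.factorization p < n.factorization q
    · -- swap step
      obtain ⟨p, q, hp, hq, hpq, hpn, hqn, hv⟩ := h2
      obtain ⟨α, β, t, hα, hβ, hne, hpt, hqt, ht, hvα, hvβ⟩ := decomp2 hp hq hpq.ne hpn hqn hn0
      have hαβ : α < β := by rw [← hvα, ← hvβ] at hv; exact hv
      have hp0 : 0 < p := hp.pos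
      set n' := p ^ β * (q ^ α * t) with hn'
      have hlt : n' < n := by
        rw [hne, hn']
        have := pow_cross_lt hpq hαβ hp0
        calc p ^ β * (q ^ α * t) = (p ^ β * q ^ α) * t := by ring
          _ < (p ^ α * q ^ β) * t := (Nat.mul_lt_mul_right (Nat.pos_of_ne_zero ht)).2 this
          _ = p ^ α * (q ^ β * t) := by ring
      have hn'2 : 2 ≤ n' := by
        have hn'0 : 0 < n' := Nat.pos_of_ne_zero (by
          exact Nat.mul_ne_zero (pow_ne_zero _ hp0.ne')
            (Nat.mul_ne_zero (pow_ne_zero _ (hp0.trans hpq).ne') ht))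
        calc 2 ≤ p := hp.two_le
          _ ≤ n' := Nat.le_of_dvd hn'0 (Dvd.dvd.mul_right (dvd_pow_self p (by omega)) _)
      have hratio : σ n * n' ≤ σ n' * n := by
        rw [hne, hn', sigma_pq_mul hp hq hpq.ne hpt hqt,
          sigma_pq_mul hp hq hpq.ne hpt hqt]
        have hkey := key_S hp0 hpq.le hαβ.le
        calc S p α * (S q β * σ t) * (p ^ β * (q ^ α * t))
            = ((S p α * p ^ β) * (S q β * q ^ α)) * (σ t * t) := by ring
          _ ≤ ((S p β * p ^ α) * (S q α * q ^ β)) * (σ t * t) :=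
              Nat.mul_le_mul_right _ hkey
          _ = S p β * (S q α * σ t) * (p ^ α * (q ^ β * t)) := by ring
      obtain ⟨m, hm2, hmHR, hmle, hmratio, hminv⟩ := IH n' hlt hn'2
      refine ⟨m, hm2, hmHR, le_trans hmle hlt.le, ?_, ?_⟩
      · have h1 : σ n * m * n' ≤ σ m * n * n' := by
          calc σ n * m * n' = (σ n * n') * m := by ring
            _ ≤ (σ n' * n) * m := Nat.mul_le_mul_right _ hratio
            _ = (σ n' * m) * n := by ring
            _ ≤ (σ m * n') * n := Nat.mul_le_mul_right _ hmratio
            _ = σ m * n * n' := by ring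
        exact Nat.le_of_mul_le_mul_right h1 (by omega)
      · intro hm5040 _
        by_cases hn'5040 : n' = 5040
        · have := step_swap_5040 hp hq hpq hpt hqt hαβ hα (hn' ▸ hn'5040.symm ▸ rfl)
          rw [hne, sigma_pq_mul hp hq hpq.ne hpt hqt]
          exact this
        · have hinv := hminv hm5040 hn'5040
          have h2 : 110 * σ n * n' ≤ 403 * n * n' := by
            calc 110 * σ n * n' = 110 * (σ n * n') := by ring
              _ ≤ 110 * (σ n' * n) := Nat.mul_le_mul_left _ hratio
              _ = (110 * σ n') * n := by ring
              _ ≤ (403 * n') * n := Nat.mul_le_mul_right _ hinv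
              _ = 403 * n * n' := by ring
          exact Nat.le_of_mul_le_mul_right h2 (by omega)
    · -- terminal: n is HR
      push_neg at h1 h2
      have hHR : IsHardyRamanujan n :=
        hr_of_closed_sorted hn
          (fun p q hp hq hpq hqn => by
            by_contra hpn
            exact absurd hqn (h1 p q hp hq hpq hpn))
          (fun p q hp hq hpq hpn hqn => h2 p q hp hq hpq hpn hqn)
      exact ⟨n, hn, hHR, le_refl n, le_refl _, fun h h' => absurd h h'⟩

lemma gamma_lb : (0.5614 : ℝ) < Real.eulerMascheroniConstant := by
  have h := Real.eulerMascheroniSeq_lt_eulerMascheroniConstant 31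
  have hseq : Real.eulerMascheroniSeq 31 = ((harmonic 31 : ℚ) : ℝ) - Real.log 32 := by
    rw [Real.eulerMascheroniSeq]
    norm_num
  have hh : (40272/10000 : ℝ) ≤ ((harmonic 31 : ℚ) : ℝ) := by
    have h0 : (40272/10000 : ℚ) ≤ harmonic 31 := by norm_num [harmonic_succ]
    have h1 := (Rat.cast_le (K := ℝ)).2 h0
    push_cast at h1
    convert h1 using 2 <;> norm_num
  have hlog32 : Real.log 32 ≤ 5 * 0.6931472 := by
    rw [show (32:ℝ) = 2^5 by norm_num, Real.log_pow]
    push_cast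
    nlinarith [Real.log_two_lt_d9]
  rw [hseq] at h
  linarith

lemma exp_gamma_lb : (1.7484 : ℝ) ≤ Real.exp Real.eulerMascheroniConstant := by
  have h1 : Real.exp 0.5614 ≤ Real.exp Real.eulerMascheroniConstant :=
    Real.exp_le_exp.2 gamma_lb.le
  refine le_trans ?_ h1
  have h2 := Real.sum_le_exp_of_nonneg (x := 0.5614) (by norm_num) 4
  refine le_trans ?_ h2
  simp_rw [Finset.sum_range_succ]
  norm_num [Nat.factorial]

lemma log_lb_aux {y : ℝ} (hy : 0 < y) : 1 - 1/y ≤ Real.log y := by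
  have h := Real.log_le_sub_one_of_pos (show (0:ℝ) < 1/y by positivity)
  rw [Real.log_div one_ne_zero hy.ne'] at h
  simp only [Real.log_one, zero_sub] at h
  linarith

lemma loglog_lb {x : ℝ} (hx : (5041 : ℝ) ≤ x) : (2.1388 : ℝ) ≤ Real.log (Real.log x) := by
  have hlog2 := Real.log_two_gt_d9
  have h5041 : (8.505 : ℝ) ≤ Real.log 5041 := by
    have hsplit : (5041 : ℝ) = 4096 * (5041/4096) := by norm_num
    have : Real.log 5041 = 12 * Real.log 2 + Real.log (5041/4096) := by
      rw [hsplit, Real.log_mul (by norm_num) (by norm_num),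
        show (4096:ℝ) = 2^12 by norm_num, Real.log_pow]
      push_cast; ring
    rw [this]
    have h2 := log_lb_aux (show (0:ℝ) < 5041/4096 by norm_num)
    have : (1:ℝ) - 1/(5041/4096) = 945/5041 := by norm_num
    nlinarith
  have hx' : (8.505 : ℝ) ≤ Real.log x :=
    le_trans h5041 (Real.log_le_log (by norm_num) hx)
  have h8 : (2.1388 : ℝ) ≤ Real.log 8.505 := by
    have : Real.log 8.505 = 3 * Real.log 2 + Real.log (8.505/8) := by
      rw [show (8.505:ℝ) = 8 * (8.505/8) by norm_num] 
      rw [Real.log_mul (by norm_num) (by norm_num), show (8:ℝ) = 2^3 by norm_num,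
        Real.log_pow]
      push_cast; ring
    rw [this]
    have h2 := log_lb_aux (show (0:ℝ) < 8.505/8 by norm_num)
    have h3 : (1:ℝ) - 1/(8.505/8) = 505/8505 := by norm_num
    nlinarith
  exact le_trans h8 (Real.log_le_log (by norm_num) hx')


theorem robin_of_hardyRamanujan_robin
    (H : ∀ m : ℕ, 5040 < m → IsHardyRamanujan m →
      (ArithmeticFunction.sigma 1 m : ℝ) / m <
        Real.exp Real.eulerMascheroniConstant * Real.log (Real.log m)) :
    ∀ n : ℕ, 5040 < n →
      (ArithmeticFunction.sigma 1 n : ℝ) / n <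
        Real.exp Real.eulerMascheroniConstant * Real.log (Real.log n) := by
  intro n hn
  obtain ⟨m, hm2, hmHR, hmle, hmratio, hminv⟩ := descent n (by omega)
  have hn0 : (0:ℝ) < n := by positivity
  have hm0 : (0:ℝ) < m := by exact_mod_cast (by omega : (0:ℕ) < m)
  have hratioR : (σ n : ℝ) / n ≤ (σ m : ℝ) / m := by
    rw [div_le_div_iff₀ hn0 hm0]
    exact_mod_cast hmratio
  have hn5041 : (5041 : ℝ) ≤ (n : ℝ) := by exact_mod_cast (by omega : (5041:ℕ) ≤ n)
  have hll := loglog_lb hn5041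
  have heγ := exp_gamma_lb
  by_cases hm5 : 5040 < m
  · have hH := H m hm5 hmHR
    refine lt_of_le_of_lt hratioR (lt_of_lt_of_le hH ?_)
    apply mul_le_mul_of_nonneg_left _ (Real.exp_pos _).le
    apply Real.log_le_log
    · exact Real.log_pos (by exact_mod_cast (by omega : (1:ℕ) < m))
    · apply Real.log_le_log hm0
      exact_mod_cast hmle
  · push_neg at hm5
    have hbound : (26:ℝ)/7 < Real.exp Real.eulerMascheroniConstant * Real.log (Real.log n) := by
      nlinarith [Real.exp_pos Real.eulerMascheroniConstant]
    by_cases hm5040 : m = 5040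
    · have hinv := hminv hm5040 (by omega)
      have : (σ n : ℝ) / n ≤ 403/110 := by
        rw [div_le_div_iff₀ hn0 (by norm_num : (0:ℝ) < 110)]
        exact_mod_cast (by linarith : (σ n : ℕ) * 110 ≤ 403 * n)
      refine lt_of_le_of_lt this (lt_trans (by norm_num) hbound)
    · have hfc := finite_check hmHR hm5 hm5040
      have hmr : (σ m : ℝ) / m ≤ 26/7 := by
        rw [div_le_div_iff₀ hm0 (by norm_num : (0:ℝ) < 7)]
        exact_mod_cast (by linarith : (σ m : ℕ) * 7 ≤ 26 * m)
      exact lt_of_le_of_lt (le_trans hratioR hmr) hbound
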